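/- Let Ωₜ satisfy the standing regularity assumptions and let Φ, Ψ be C¹,¹ diffeomorphisms as in the setting. Then the matrix B(t,y) := DΨ(t,Φ(t,y)) DΨ(t,Φ(t,y))ᵀ − ∂ₜΨ(t,Φ(t,y)) ⊗ ∂ₜΨ(t,Φ(t,y)) is symmetric, and if moreover |∂ₜΦ(t,y)| < 1 for all (t,y) ∈ [0,T]×closure(Ω₀), then B is uniformly elliptic: there exists c_B > 0 such that (B(t,y)w)·w ≥ c_B |w|² for all w ∈ ℝᴺ and all (t,y). -/

import Mathlib

open MeasureTheory Set
open scoped RealInnerProductSpace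
noncomputable section

set_option maxHeartbeats 1000000 in
/-- The matrix `B(t,y) = DΨ(t,Φ(t,y)) DΨ(t,Φ(t,y))ᵀ − ∂ₜΨ(t,Φ(t,y)) ⊗ ∂ₜΨ(t,Φ(t,y))`
is symmetric, and under the subsonic condition `|∂ₜΦ| < 1` it is uniformly elliptic. -/
theorem stmt_8 {N : ℕ} {T : ℝ} (hT : 0 < T)
    (Ω₀ : Set (EuclideanSpace ℝ (Fin N)))
    (Ω : ℝ → Set (EuclideanSpace ℝ (Fin N)))
    (Φ Ψ : ℝ → EuclideanSpace ℝ (Fin N) → EuclideanSpace ℝ (Fin N))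
    (hΩ₀ : IsOpen Ω₀) (hΩ₀b : Bornology.IsBounded Ω₀)
    (hΩ : ∀ t ∈ Set.Icc (0:ℝ) T, IsOpen (Ω t))
    (hmaps : ∀ t ∈ Set.Icc (0:ℝ) T, Φ t '' Ω₀ = Ω t)
    -- `C¹,¹` regularity of `Φ, Ψ`
    (hΦC1 : ∀ t ∈ Set.Icc (0:ℝ) T, ∀ y ∈ closure Ω₀,
      ContDiffAt ℝ 1 (fun p : ℝ × EuclideanSpace ℝ (Fin N) => Φ p.1 p.2) (t, y))
    (hΦLip : ∃ L, LipschitzOnWith L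
      (fderiv ℝ (fun p : ℝ × EuclideanSpace ℝ (Fin N) => Φ p.1 p.2))
      (Set.Icc (0:ℝ) T ×ˢ closure Ω₀))
    (hΨC1 : ∀ t ∈ Set.Icc (0:ℝ) T, ∀ x ∈ closure (Ω t),
      ContDiffAt ℝ 1 (fun p : ℝ × EuclideanSpace ℝ (Fin N) => Ψ p.1 p.2) (t, x))
    (hΨLip : ∃ L, LipschitzOnWith L
      (fderiv ℝ (fun p : ℝ × EuclideanSpace ℝ (Fin N) => Ψ p.1 p.2))
      {p : ℝ × EuclideanSpace ℝ (Fin N) | p.1 ∈ Set.Icc (0:ℝ) T ∧ p.2 ∈ closure (Ω p.1)})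
    (hΦΨ : ∀ t ∈ Set.Icc (0:ℝ) T, ∀ x ∈ closure (Ω t), Φ t (Ψ t x) = x)
    (hΨΦ : ∀ t ∈ Set.Icc (0:ℝ) T, ∀ y ∈ closure Ω₀, Ψ t (Φ t y) = y)
    -- subsonic condition `|∂ₜΦ(t,y)| < 1`
    (hsub : ∀ t ∈ Set.Icc (0:ℝ) T, ∀ y ∈ closure Ω₀,
      ‖deriv (fun s => Φ s y) t‖ < 1) :
    -- symmetry of `B`
    (∀ t ∈ Set.Icc (0:ℝ) T, ∀ y ∈ closure Ω₀,
      ∀ v w : EuclideanSpace ℝ (Fin N),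
        ⟪(fderiv ℝ (Ψ t) (Φ t y))
            ((ContinuousLinearMap.adjoint (fderiv ℝ (Ψ t) (Φ t y))) v)
          - ⟪deriv (fun s => Ψ s (Φ t y)) t, v⟫ • deriv (fun s => Ψ s (Φ t y)) t, w⟫
        = ⟪v, (fderiv ℝ (Ψ t) (Φ t y))
            ((ContinuousLinearMap.adjoint (fderiv ℝ (Ψ t) (Φ t y))) w)
          - ⟪deriv (fun s => Ψ s (Φ t y)) t, w⟫ • deriv (fun s => Ψ s (Φ t y)) t⟫) ∧
    -- uniform ellipticity of `B`
    (∃ c > (0:ℝ), ∀ t ∈ Set.Icc (0:ℝ) T, ∀ y ∈ closure Ω₀,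
      ∀ v : EuclideanSpace ℝ (Fin N),
        c * ‖v‖^2 ≤
        ⟪(fderiv ℝ (Ψ t) (Φ t y))
            ((ContinuousLinearMap.adjoint (fderiv ℝ (Ψ t) (Φ t y))) v)
          - ⟪deriv (fun s => Ψ s (Φ t y)) t, v⟫ • deriv (fun s => Ψ s (Φ t y)) t, v⟫) := by
  constructor
  · -- symmetry
    intro t ht y hy v w
    rw [inner_sub_left, inner_sub_right, real_inner_smul_left, real_inner_smul_right]
    have h1 : ⟪(fderiv ℝ (Ψ t) (Φ t y))
          ((ContinuousLinearMap.adjoint (fderiv ℝ (Ψ t) (Φ t y))) v), w⟫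
        = ⟪v, (fderiv ℝ (Ψ t) (Φ t y))
          ((ContinuousLinearMap.adjoint (fderiv ℝ (Ψ t) (Φ t y))) w)⟫ := by
      rw [← ContinuousLinearMap.adjoint_inner_right (fderiv ℝ (Ψ t) (Φ t y)) _ w,
        ContinuousLinearMap.adjoint_inner_left]
    rw [h1, real_inner_comm (deriv (fun s => Ψ s (Φ t y)) t) v]
    ring
  · -- ellipticity
    classical
    rcases Ω₀.eq_empty_or_nonempty with h0 | ⟨y₀, hy₀⟩
    · exact ⟨1, one_pos, by simp [h0]⟩
    set F : ℝ × EuclideanSpace ℝ (Fin N) → EuclideanSpace ℝ (Fin N) := fun p => Φ p.1 p.2 with hFdef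
    set G : ℝ × EuclideanSpace ℝ (Fin N) → EuclideanSpace ℝ (Fin N) := fun p => Ψ p.1 p.2 with hGdef
    set Rc : EuclideanSpace ℝ (Fin N) →L[ℝ] ℝ × EuclideanSpace ℝ (Fin N) := ContinuousLinearMap.inr ℝ ℝ _ with hRc
    obtain ⟨LΦ, hLΦ⟩ := hΦLip
    obtain ⟨LΨ, hLΨ⟩ := hΨLip
    -- continuity of Φ t on closure Ω₀
    have hΦtc : ∀ t ∈ Set.Icc (0:ℝ) T, ContinuousOn (Φ t) (closure Ω₀) := by
      intro t ht z hz
      have h1 : ContinuousAt F (t, z) := (hΦC1 t ht z hz).continuousAt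
      have h2 : ContinuousAt (fun z : EuclideanSpace ℝ (Fin N) => ((t:ℝ), z)) z :=
        (continuous_const.prodMk continuous_id).continuousAt
      exact (h1.comp h2).continuousWithinAt
    -- Φ t maps closure Ω₀ into closure (Ω t)
    have hx : ∀ t ∈ Set.Icc (0:ℝ) T, ∀ y ∈ closure Ω₀, Φ t y ∈ closure (Ω t) := by
      intro t ht y hy
      have := (hΦtc t ht).image_closure (s := Ω₀) ⟨y, hy, rfl⟩
      rwa [hmaps t ht] at this
    -- basic derivative facts
    have hFd : ∀ t ∈ Set.Icc (0:ℝ) T, ∀ y ∈ closure Ω₀,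
        HasFDerivAt F (fderiv ℝ F (t, y)) (t, y) := fun t ht y hy =>
      ((hΦC1 t ht y hy).differentiableAt one_ne_zero).hasFDerivAt
    have hGd : ∀ t ∈ Set.Icc (0:ℝ) T, ∀ y ∈ closure Ω₀,
        HasFDerivAt G (fderiv ℝ G (t, Φ t y)) (t, Φ t y) := fun t ht y hy =>
      ((hΨC1 t ht _ (hx t ht y hy)).differentiableAt one_ne_zero).hasFDerivAt
    -- time derivative of Φ
    have hB3 : ∀ t ∈ Set.Icc (0:ℝ) T, ∀ y ∈ closure Ω₀,
        HasDerivAt (fun s => Φ s y) (fderiv ℝ F (t, y) (1, 0)) t := by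
      intro t ht y hy
      have h1 : HasDerivAt (fun s : ℝ => (s, y)) ((1:ℝ), (0:EuclideanSpace ℝ (Fin N))) t :=
        (hasDerivAt_id t).prodMk (hasDerivAt_const t y)
      exact (hFd t ht y hy).comp_hasDerivAt t h1
    -- time derivative of Ψ
    have hB4 : ∀ t ∈ Set.Icc (0:ℝ) T, ∀ y ∈ closure Ω₀,
        HasDerivAt (fun s => Ψ s (Φ t y)) (fderiv ℝ G (t, Φ t y) (1, 0)) t := by
      intro t ht y hy
      have h1 : HasDerivAt (fun s : ℝ => (s, Φ t y)) ((1:ℝ), (0:EuclideanSpace ℝ (Fin N))) t :=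
        (hasDerivAt_id t).prodMk (hasDerivAt_const t (Φ t y))
      exact (hGd t ht y hy).comp_hasDerivAt t h1
    -- spatial derivative of Ψ t
    have hB5 : ∀ t ∈ Set.Icc (0:ℝ) T, ∀ y ∈ closure Ω₀,
        HasFDerivAt (Ψ t) ((fderiv ℝ G (t, Φ t y)).comp Rc) (Φ t y) := by
      intro t ht y hy
      exact (hGd t ht y hy).comp (Φ t y) (hasFDerivAt_prodMk_right t (Φ t y))
    have hB5' : ∀ t ∈ Set.Icc (0:ℝ) T, ∀ y ∈ closure Ω₀,
        fderiv ℝ (Ψ t) (Φ t y) = (fderiv ℝ G (t, Φ t y)).comp Rc := fun t ht y hy =>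
      (hB5 t ht y hy).fderiv
    -- spatial derivative of Φ t (at arbitrary closure point)
    have hB5Φ : ∀ t ∈ Set.Icc (0:ℝ) T, ∀ y ∈ closure Ω₀,
        HasFDerivAt (Φ t) ((fderiv ℝ F (t, y)).comp Rc) y := by
      intro t ht y hy
      exact (hFd t ht y hy).comp y (hasFDerivAt_prodMk_right t y)
    -- time chain rule: ∂ₜΨ + DΨ ∂ₜΦ = 0
    have hB6 : ∀ t ∈ Set.Icc (0:ℝ) T, ∀ y ∈ closure Ω₀,
        fderiv ℝ G (t, Φ t y) (1, fderiv ℝ F (t, y) (1, 0)) = 0 := by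
      intro t ht y hy
      have hc : HasDerivAt (fun s => Ψ s (Φ s y))
          (fderiv ℝ G (t, Φ t y) (1, fderiv ℝ F (t, y) (1, 0))) t := by
        have h1 : HasDerivAt (fun s : ℝ => (s, Φ s y))
            ((1:ℝ), fderiv ℝ F (t, y) (1, 0)) t :=
          (hasDerivAt_id t).prodMk (hB3 t ht y hy)
        exact (hGd t ht y hy).comp_hasDerivAt t h1
      have h0 : HasDerivWithinAt (fun s => Ψ s (Φ s y)) 0 (Set.Icc (0:ℝ) T) t :=
        (hasDerivWithinAt_const t _ y).congr (fun s hs => hΨΦ s hs y hy) (hΨΦ t ht y hy)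
      exact (uniqueDiffOn_Icc hT t ht).eq_deriv _ hc.hasDerivWithinAt h0
    -- spatial chain rule at interior points
    have hchain0 : ∀ t ∈ Set.Icc (0:ℝ) T, ∀ y ∈ Ω₀,
        ((fderiv ℝ G (t, Φ t y)).comp Rc).comp ((fderiv ℝ F (t, y)).comp Rc)
          = ContinuousLinearMap.id ℝ (EuclideanSpace ℝ (Fin N)) := by
      intro t ht y hy
      have hy' : y ∈ closure Ω₀ := subset_closure hy
      have heq : (Ψ t ∘ Φ t) =ᶠ[nhds y] id :=
        Filter.eventuallyEq_of_mem (hΩ₀.mem_nhds hy)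
          (fun z hz => hΨΦ t ht z (subset_closure hz))
      have hcomp : HasFDerivAt (Ψ t ∘ Φ t)
          (((fderiv ℝ G (t, Φ t y)).comp Rc).comp ((fderiv ℝ F (t, y)).comp Rc)) y :=
        (hB5 t ht y hy').comp y (hB5Φ t ht y hy')
      have hid : HasFDerivAt (Ψ t ∘ Φ t)
          (ContinuousLinearMap.id ℝ (EuclideanSpace ℝ (Fin N))) y :=
        (hasFDerivAt_id y).congr_of_eventuallyEq heq
      exact hcomp.unique hid
    -- extend to closure by continuity
    have hchain : ∀ t ∈ Set.Icc (0:ℝ) T, ∀ y ∈ closure Ω₀,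
        ((fderiv ℝ G (t, Φ t y)).comp Rc).comp ((fderiv ℝ F (t, y)).comp Rc)
          = ContinuousLinearMap.id ℝ (EuclideanSpace ℝ (Fin N)) := by
      intro t ht y hy
      set Dmap : EuclideanSpace ℝ (Fin N) →
          (EuclideanSpace ℝ (Fin N) →L[ℝ] EuclideanSpace ℝ (Fin N)) :=
        fun z => ((fderiv ℝ G (t, Φ t z)).comp Rc).comp ((fderiv ℝ F (t, z)).comp Rc)
        with hDmap
      have hcont : ContinuousOn Dmap (closure Ω₀) := by
        have h1 : ContinuousOn (fun z : EuclideanSpace ℝ (Fin N) => fderiv ℝ F (t, z))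
            (closure Ω₀) := by
          apply hLΦ.continuousOn.comp
            (Continuous.continuousOn (continuous_const.prodMk continuous_id))
          intro z hz; exact ⟨ht, hz⟩
        have h2 : ContinuousOn (fun z : EuclideanSpace ℝ (Fin N) => fderiv ℝ G (t, Φ t z))
            (closure Ω₀) := by
          apply hLΨ.continuousOn.comp
            ((continuousOn_const.prodMk (hΦtc t ht)))
          intro z hz; exact ⟨ht, hx t ht z hz⟩
        exact (h2.clm_comp continuousOn_const).clm_comp (h1.clm_comp continuousOn_const)
      obtain ⟨u, hu, hulim⟩ := mem_closure_iff_seq_limit.1 hy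
      have hlim : Filter.Tendsto (fun n => Dmap (u n)) Filter.atTop (nhds (Dmap y)) := by
        apply (hcont y hy).tendsto.comp
        exact tendsto_nhdsWithin_of_tendsto_nhds_of_eventually_within _ hulim
          (Filter.Eventually.of_forall fun n => subset_closure (hu n))
      have hconst : (fun n => Dmap (u n)) =
          fun _ => ContinuousLinearMap.id ℝ (EuclideanSpace ℝ (Fin N)) :=
        funext fun n => hchain0 t ht (u n) (hu n)
      rw [hconst] at hlim
      exact tendsto_nhds_unique hlim tendsto_const_nhds
    -- compactness
    set K : Set (ℝ × EuclideanSpace ℝ (Fin N)) := Set.Icc (0:ℝ) T ×ˢ closure Ω₀ with hK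
    have hKc : IsCompact K := isCompact_Icc.prod hΩ₀b.isCompact_closure
    have hKne : K.Nonempty := ⟨(0, y₀), ⟨⟨le_refl 0, hT.le⟩, subset_closure hy₀⟩⟩
    have hDFc : ContinuousOn (fun p => fderiv ℝ F p) K := hLΦ.continuousOn
    -- sup of the time derivative norm
    obtain ⟨p₁, hp₁K, hp₁'⟩ := hKc.exists_isMaxOn hKne
      (((hDFc.clm_apply continuousOn_const).norm :
        ContinuousOn (fun p => ‖fderiv ℝ F p ((1:ℝ), (0:EuclideanSpace ℝ (Fin N)))‖) K))
    have hp₁ := isMaxOn_iff.1 hp₁'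
    set m : ℝ := ‖fderiv ℝ F p₁ ((1:ℝ), (0:EuclideanSpace ℝ (Fin N)))‖ with hm
    have hm0 : 0 ≤ m := norm_nonneg _
    have hm1 : m < 1 := by
      obtain ⟨ht₁, hy₁⟩ := hp₁K
      have := (hB3 p₁.1 ht₁ p₁.2 hy₁).deriv
      rw [hm, ← this]
      exact hsub p₁.1 ht₁ p₁.2 hy₁
    -- sup of the full space derivative norm
    obtain ⟨p₂, hp₂K, hp₂'⟩ := hKc.exists_isMaxOn hKne hDFc.norm
    have hp₂ := isMaxOn_iff.1 hp₂'
    set M : ℝ := max ‖fderiv ℝ F p₂‖ 1 with hM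
    have hM1 : (1:ℝ) ≤ M := le_max_right _ _
    have hM0 : (0:ℝ) < M := lt_of_lt_of_le one_pos hM1
    refine ⟨(1 - m^2) / M^2, div_pos (by nlinarith) (by positivity), ?_⟩
    intro t ht y hy v
    -- notation
    set Bm := fderiv ℝ G (t, Φ t y) with hBm
    set A := fderiv ℝ F (t, y) with hA
    set D := Bm.comp Rc with hD
    set w : EuclideanSpace ℝ (Fin N) := A ((1:ℝ), 0) with hw
    set u : EuclideanSpace ℝ (Fin N) := Bm ((1:ℝ), 0) with hu
    rw [hB5' t ht y hy, (hB4 t ht y hy).deriv]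
    -- u = -(D w)
    have huDw : u = -(D w) := by
      have h1 : ((1:ℝ), w) = ((1:ℝ), (0:EuclideanSpace ℝ (Fin N))) + ((0:ℝ), w) := by
        simp
      have h2 : u + D w = 0 := by
        have : D w = Bm ((0:ℝ), w) := rfl
        rw [this, hu, ← map_add, ← h1]
        exact hB6 t ht y hy
      linear_combination (norm := module) h2
    have hDP : ∀ z, D ((A.comp Rc) z) = z := by
      intro z
      have := DFunLike.congr_fun (hchain t ht y hy) z
      simp at this; exact this
    set q : ℝ := ⟪w, (ContinuousLinearMap.adjoint D) v⟫ with hq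
    set b : ℝ := ‖(ContinuousLinearMap.adjoint D) v‖ with hb
    -- the quadratic form equals ‖D†v‖² − q²
    have key : ⟪D ((ContinuousLinearMap.adjoint D) v) - ⟪u, v⟫ • u, v⟫ = b^2 - q^2 := by
      rw [inner_sub_left, real_inner_smul_left]
      have h1 : ⟪D ((ContinuousLinearMap.adjoint D) v), v⟫ = b^2 := by
        rw [← ContinuousLinearMap.adjoint_inner_right D _ v, real_inner_self_eq_norm_sq]
      have h2 : ⟪u, v⟫ = -q := by
        rw [huDw, inner_neg_left, hq, ContinuousLinearMap.adjoint_inner_right]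
      rw [h1, h2]; ring
    rw [key]
    -- bounds
    have hwm : ‖w‖ ≤ m := hp₁ (t, y) ⟨ht, hy⟩
    have hq2 : q^2 ≤ m^2 * b^2 := by
      have h1 : |q| ≤ ‖w‖ * b := abs_real_inner_le_norm w _
      have h2 : |q| ≤ m * b := h1.trans (mul_le_mul_of_nonneg_right hwm (norm_nonneg _))
      nlinarith [abs_nonneg q, sq_abs q, norm_nonneg ((ContinuousLinearMap.adjoint D) v)]
    have hvb : ‖v‖ ≤ M * b := by
      rcases eq_or_ne v 0 with rfl | hv0
      · simp; positivity
      · have hv0' : 0 < ‖v‖ := norm_pos_iff.2 hv0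
        have h1 : ‖v‖ * ‖v‖ ≤ (M * b) * ‖v‖ := by
          have e1 : ‖v‖ * ‖v‖ = ⟪(A.comp Rc) v, (ContinuousLinearMap.adjoint D) v⟫ := by
            rw [ContinuousLinearMap.adjoint_inner_right, hDP v,
              real_inner_self_eq_norm_mul_norm]
          have e2 : ⟪(A.comp Rc) v, (ContinuousLinearMap.adjoint D) v⟫
              ≤ ‖(A.comp Rc) v‖ * b := real_inner_le_norm _ _
          have e3 : ‖(A.comp Rc) v‖ ≤ M * ‖v‖ := by
            have : (A.comp Rc) v = A ((0:ℝ), v) := rfl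
            rw [this]
            have h4 : ‖A ((0:ℝ), v)‖ ≤ ‖A‖ * ‖((0:ℝ), v)‖ := A.le_opNorm _
            have h5 : ‖((0:ℝ), v)‖ = ‖v‖ := by
              simp [Prod.norm_def]
            have h6 : ‖A‖ ≤ M := (hp₂ (t, y) ⟨ht, hy⟩).trans (le_max_left _ _)
            rw [h5] at h4
            exact h4.trans (mul_le_mul_of_nonneg_right h6 (norm_nonneg v))
          calc ‖v‖ * ‖v‖ = ⟪(A.comp Rc) v, (ContinuousLinearMap.adjoint D) v⟫ := e1
            _ ≤ ‖(A.comp Rc) v‖ * b := e2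
            _ ≤ (M * ‖v‖) * b := mul_le_mul_of_nonneg_right e3 (norm_nonneg _)
            _ = (M * b) * ‖v‖ := by ring
        exact le_of_mul_le_mul_right h1 hv0'
    -- conclude
    have hcpos : 0 < (1 - m^2) / M^2 := div_pos (by nlinarith) (by positivity)
    have hcM : (1 - m^2) / M^2 * M^2 = 1 - m^2 := div_mul_cancel₀ _ (by positivity)
    have hb0 : 0 ≤ b := norm_nonneg _
    have h1 : ‖v‖^2 ≤ M^2 * b^2 := by
      have h2 := mul_le_mul hvb hvb (norm_nonneg v) (by positivity)
      calc ‖v‖^2 = ‖v‖ * ‖v‖ := by ring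
        _ ≤ (M * b) * (M * b) := h2
        _ = M^2 * b^2 := by ring
    calc (1 - m^2) / M^2 * ‖v‖^2 ≤ (1 - m^2) / M^2 * (M^2 * b^2) :=
          mul_le_mul_of_nonneg_left h1 hcpos.le
      _ = ((1 - m^2) / M^2 * M^2) * b^2 := by ring
      _ = (1 - m^2) * b^2 := by rw [hcM]
      _ = b^2 - m^2 * b^2 := by ring
      _ ≤ b^2 - q^2 := by linarith [hq2]
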